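/- Let h(x,y) = A(1 - e^{ax})(1 - e^{by}) with A > 0 and a, b < 0 (Spillman–Mitscherlich production function of 2 variables). Then K(x,y) = h_xx h_yy - (h_xy)² is not a constant function on ℝ₊². -/

import Mathlib

open Set

/-- Relative (isotropic Gaussian) curvature of the Monge surface z = h(x,y). -/
noncomputable def relCurv (h : ℝ → ℝ → ℝ) (x y : ℝ) : ℝ :=
  deriv (deriv (fun x' => h x' y)) x * deriv (deriv (fun y' => h x y')) y -
    (deriv (fun y' => deriv (fun x' => h x' y') x) y) ^ 2

lemma exp_mul_hasDerivAt (c x : ℝ) :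
    HasDerivAt (fun t => Real.exp (c * t)) (c * Real.exp (c * x)) x := by
  have h := (Real.hasDerivAt_exp (c * x)).comp x ((hasDerivAt_id x).const_mul c)
  exact h.congr_deriv (by ring)

lemma aux_hasDerivAt (A c C x : ℝ) :
    HasDerivAt (fun t => A * (1 - Real.exp (c * t)) * C)
      (-(A * c * Real.exp (c * x)) * C) x := by
  have h := (((hasDerivAt_const x (1:ℝ)).sub (exp_mul_hasDerivAt c x)).const_mul A).mul_const C
  exact h.congr_deriv (by ring)

lemma aux_deriv (A c C x : ℝ) :
    deriv (fun t => A * (1 - Real.exp (c * t)) * C) x = -(A * c * Real.exp (c * x)) * C :=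
  (aux_hasDerivAt A c C x).deriv

lemma relCurv_eq (A a b x y : ℝ) :
    relCurv (fun x y => A * (1 - Real.exp (a * x)) * (1 - Real.exp (b * y))) x y =
      A ^ 2 * a ^ 2 * b ^ 2 * Real.exp (a * x) * Real.exp (b * y) *
        (1 - Real.exp (a * x) - Real.exp (b * y)) := by
  have hx1 : (deriv (fun x' => A * (1 - Real.exp (a * x')) * (1 - Real.exp (b * y)))) =
      fun t => -(A * a) * Real.exp (a * t) * (1 - Real.exp (b * y)) := by
    funext t
    rw [aux_deriv]
    ring
  have hxx : deriv (deriv (fun x' => A * (1 - Real.exp (a * x')) * (1 - Real.exp (b * y)))) x =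
      -(A * a ^ 2) * Real.exp (a * x) * (1 - Real.exp (b * y)) := by
    rw [hx1]
    have h := ((exp_mul_hasDerivAt a x).const_mul (-(A * a))).mul_const
      (1 - Real.exp (b * y))
    rw [h.deriv]
    ring
  -- y second derivative
  have hy1 : (deriv (fun y' => A * (1 - Real.exp (a * x)) * (1 - Real.exp (b * y')))) =
      fun t => -((A * (1 - Real.exp (a * x))) * b) * Real.exp (b * t) := by
    funext t
    have h := ((exp_mul_hasDerivAt b t).const_mul (A * (1 - Real.exp (a * x)))).neg
    have h2 : HasDerivAt (fun y' => A * (1 - Real.exp (a * x)) * (1 - Real.exp (b * y')))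
        (-((A * (1 - Real.exp (a * x))) * b) * Real.exp (b * t)) t := by
      have h3 := ((hasDerivAt_const t (1:ℝ)).sub (exp_mul_hasDerivAt b t)).const_mul
        (A * (1 - Real.exp (a * x)))
      exact h3.congr_deriv (by ring)
    exact h2.deriv
  have hyy : deriv (deriv (fun y' => A * (1 - Real.exp (a * x)) * (1 - Real.exp (b * y')))) y =
      -(A * (1 - Real.exp (a * x)) * b ^ 2) * Real.exp (b * y) := by
    rw [hy1]
    have h := (exp_mul_hasDerivAt b y).const_mul (-((A * (1 - Real.exp (a * x))) * b))
    rw [h.deriv]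
    ring
  -- mixed derivative
  have hxy : deriv (fun y' => deriv
      (fun x' => A * (1 - Real.exp (a * x')) * (1 - Real.exp (b * y'))) x) y =
      A * a * b * Real.exp (a * x) * Real.exp (b * y) := by
    have hfun : (fun y' => deriv
        (fun x' => A * (1 - Real.exp (a * x')) * (1 - Real.exp (b * y'))) x) =
        fun y' => -(A * a * Real.exp (a * x)) * (1 - Real.exp (b * y')) := by
      funext y'
      exact aux_deriv A a (1 - Real.exp (b * y')) x
    rw [hfun]
    have h : HasDerivAt (fun y' => -(A * a * Real.exp (a * x)) * (1 - Real.exp (b * y')))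
        (A * a * b * Real.exp (a * x) * Real.exp (b * y)) y := by
      have h3 := ((hasDerivAt_const y (1:ℝ)).sub (exp_mul_hasDerivAt b y)).const_mul
        (-(A * a * Real.exp (a * x)))
      exact h3.congr_deriv (by ring)
    exact h.deriv
  unfold relCurv
  rw [hxx, hyy, hxy]
  ring

/-- the relative curvature of the Spillman–Mitscherlich surface
z = A(1-e^{ax})(1-e^{by}) is not constant on ℝ₊². -/
theorem stmt16 (A a b : ℝ) (hA : 0 < A) (ha : a < 0) (hb : b < 0) :
    ¬ ∃ c : ℝ, ∀ x y : ℝ, 0 < x → 0 < y →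
      relCurv (fun x y => A * (1 - Real.exp (a * x)) * (1 - Real.exp (b * y))) x y = c := by
  rintro ⟨c, hc⟩
  set s := Real.exp (b * 1) with hs
  set D := A ^ 2 * a ^ 2 * b ^ 2 * s with hD
  have hDne : D ≠ 0 := by
    have hs0 : s > 0 := Real.exp_pos _
    have ha' : a ≠ 0 := ne_of_lt ha
    have hb' : b ≠ 0 := ne_of_lt hb
    positivity
  have key : ∀ x : ℝ, 0 < x →
      D * Real.exp (a * x) * (1 - Real.exp (a * x) - s) = c := by
    intro x hx
    have h := hc x 1 hx one_pos
    rw [relCurv_eq] at h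
    rw [← h, hD, hs]
    ring
  set u1 := Real.exp (a * 1) with hu1
  set u2 := Real.exp (a * 2) with hu2
  set u3 := Real.exp (a * 3) with hu3
  have e1 := key 1 one_pos
  have e2 := key 2 two_pos
  have e3 := key 3 (by norm_num)
  rw [← hu1] at e1
  rw [← hu2] at e2
  rw [← hu3] at e3
  have h12 : u1 ≠ u2 := by
    have : a * 2 < a * 1 := by nlinarith
    exact ne_of_gt (Real.exp_lt_exp.mpr this)
  have h23 : u2 ≠ u3 := by
    have : a * 3 < a * 2 := by nlinarith
    exact ne_of_gt (Real.exp_lt_exp.mpr this)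
  have h13 : u1 ≠ u3 := by
    have : a * 3 < a * 1 := by nlinarith
    exact ne_of_gt (Real.exp_lt_exp.mpr this)
  have q12 : u1 * (1 - u1 - s) = u2 * (1 - u2 - s) := by
    have h := e1.trans e2.symm
    field_simp at h
    rcases mul_eq_mul_left_iff.mp (by linear_combination D * h :
      D * (u1 * (1 - u1 - s)) = D * (u2 * (1 - u2 - s))) with h' | h'
    · exact h'
    · exact absurd h' hDne
  have q23 : u2 * (1 - u2 - s) = u3 * (1 - u3 - s) := by
    have h := e2.trans e3.symm
    rcases mul_eq_mul_left_iff.mp (by linear_combination h :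
      D * (u2 * (1 - u2 - s)) = D * (u3 * (1 - u3 - s))) with h' | h'
    · exact h'
    · exact absurd h' hDne
  have f12 : 1 - s - (u1 + u2) = 0 := by
    rcases mul_eq_zero.mp (by linear_combination q12 :
      (u1 - u2) * (1 - s - (u1 + u2)) = 0) with h' | h'
    · exact absurd (sub_eq_zero.mp h') h12
    · exact h'
  have f23 : 1 - s - (u2 + u3) = 0 := by
    rcases mul_eq_zero.mp (by linear_combination q23 :
      (u2 - u3) * (1 - s - (u2 + u3)) = 0) with h' | h'
    · exact absurd (sub_eq_zero.mp h') h23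
    · exact h'
  exact h13 (by linarith)
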